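/- Let X be a complex separable Banach space and let T ∈ B(X) be invertible and transitive (T has no nontrivial closed invariant subspace). Let x₀ ∈ X be nonzero with 𝔑 ≠ X, where 𝔑 is the closed linear span of {T^{−n}x₀ : n ≥ 1}, and set xₙ = T^{−n}x₀ for n ≥ 1. Then there exists a sequence (xₙ*)_{n≥1} ⊆ X* such that ⟨xᵢ*, xⱼ⟩ = δᵢⱼ for all i, j ≥ 1, i.e., {(xₙ, xₙ*)} is a bi-orthogonal system. -/

import Mathlib

open RCLike in
lemma exists_functional_of_not_mem {X : Type*} [NormedAddCommGroup X] [NormedSpace ℂ X]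
    (N : Submodule ℂ X) (hc : IsClosed (N : Set X)) {x : X} (hx : x ∉ N) :
    ∃ f : X →L[ℂ] ℂ, f x = 1 ∧ ∀ y ∈ N, f y = 0 := by
  have hconv : Convex ℝ (N : Set X) := (N.restrictScalars ℝ).convex
  obtain ⟨f, u, hfa, hfx⟩ := geometric_hahn_banach_closed_point (𝕜 := ℂ) hconv hc hx
  have hu : 0 < u := by
    have := hfa 0 N.zero_mem
    simpa using this
  have hvan : ∀ y ∈ N, f y = 0 := by
    intro y hy
    by_contra h
    have hmem : (((u + 1 : ℝ) : ℂ) * (f y)⁻¹) • y ∈ N := N.smul_mem _ hy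
    have := hfa _ hmem
    rw [map_smul, smul_eq_mul, mul_assoc, inv_mul_cancel₀ h, mul_one] at this
    have h2 : RCLike.re (((u + 1 : ℝ) : ℂ)) = u + 1 := by
      simp
    rw [h2] at this
    linarith
  have hfx0 : f x ≠ 0 := by
    intro h
    rw [h] at hfx
    simp at hfx
    linarith
  refine ⟨(f x)⁻¹ • f, ?_, ?_⟩
  · simp [inv_mul_cancel₀ hfx0]
  · intro y hy
    simp [hvan y hy]

noncomputable def biorthAux {X : Type*} [NormedAddCommGroup X] [NormedSpace ℂ X]
    (g : ℕ → (X →L[ℂ] ℂ)) (x : ℕ → X) : ℕ → (X →L[ℂ] ℂ)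
  | i => g i - ∑ j ∈ (Finset.Ico 1 i).attach, g i (x j.1) • biorthAux g x j.1
  decreasing_by exact (Finset.mem_Ico.mp j.2).2



/-- `𝔑₋ₖ`: the closed linear span of `{S^n x₀ : n ≥ k}` (here `S = T⁻¹`). -/
def closedSpanOrbitFrom {X : Type*} [NormedAddCommGroup X] [NormedSpace ℂ X]
    (S : X →L[ℂ] X) (x₀ : X) (k : ℕ) : Submodule ℂ X :=
  (Submodule.span ℂ {y : X | ∃ n : ℕ, k ≤ n ∧ y = (S ^ n) x₀}).topologicalClosure

/-- `T` is transitive: it has no nontrivial closed invariant subspace. -/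
def IsTransitiveOp {X : Type*} [NormedAddCommGroup X] [NormedSpace ℂ X]
    (T : X →L[ℂ] X) : Prop :=
  ∀ Y : Submodule ℂ X, IsClosed (Y : Set X) → (∀ x ∈ Y, T x ∈ Y) → Y = ⊥ ∨ Y = ⊤

/-- Let `X` be a complex separable Banach space, `T ∈ B(X)` invertible
(with inverse `S`) and transitive, and `x₀ ≠ 0` with `𝔑 ≠ X` where `𝔑 = [T^{−n}x₀ : n ≥ 1]`.
With `xₙ = T^{−n}x₀`, there is a sequence `(xₙ*) ⊆ X*` with `⟨xᵢ*, xⱼ⟩ = δᵢⱼ` for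
`i, j ≥ 1`, i.e. a bi-orthogonal system. -/
theorem exists_biorthogonal_system
    (X : Type*) [NormedAddCommGroup X] [NormedSpace ℂ X] [CompleteSpace X]
    [TopologicalSpace.SeparableSpace X]
    (T S : X →L[ℂ] X)
    (hTS : T.comp S = ContinuousLinearMap.id ℂ X)
    (hST : S.comp T = ContinuousLinearMap.id ℂ X)
    (htrans : IsTransitiveOp T)
    (x₀ : X) (hx₀ : x₀ ≠ 0)
    (hN : closedSpanOrbitFrom S x₀ 1 ≠ ⊤) :
    ∃ f : ℕ → (X →L[ℂ] ℂ), ∀ i j : ℕ, 1 ≤ i → 1 ≤ j →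
      f i ((S ^ j) x₀) = if i = j then 1 else 0 := by
  set N : ℕ → Submodule ℂ X := fun k => closedSpanOrbitFrom S x₀ k with hNdef
  set x : ℕ → X := fun n => (S ^ n) x₀ with hxdef
  -- basic identities
  have hTS1 : T * S = 1 := by
    rw [ContinuousLinearMap.mul_def, hTS]; rfl
  have hST1 : S * T = 1 := by
    rw [ContinuousLinearMap.mul_def, hST]; rfl
  have hcomm : Commute T S := by
    unfold Commute SemiconjBy; rw [hTS1, hST1]
  have hpow1 : ∀ k : ℕ, T ^ k * S ^ k = 1 := by
    intro k
    rw [← hcomm.mul_pow, hTS1, one_pow]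
  have hTSapply : ∀ z : X, T (S z) = z := by
    intro z
    have := DFunLike.congr_fun hTS z
    simpa using this
  have hSinj : Function.Injective S := by
    intro a b hab
    have : T (S a) = T (S b) := by rw [hab]
    rwa [hTSapply, hTSapply] at this
  have hxne : ∀ n : ℕ, x n ≠ 0 := by
    intro n h
    apply hx₀
    have : (T ^ n) ((S ^ n) x₀) = (T ^ n) 0 := congrArg _ h
    rwa [← ContinuousLinearMap.mul_apply, hpow1, ContinuousLinearMap.one_apply, map_zero] at this
  -- basics about N
  have hclosed : ∀ k, IsClosed ((N k : Submodule ℂ X) : Set X) := fun k =>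
    (Submodule.span ℂ _).isClosed_topologicalClosure
  have hgen : ∀ k n, k ≤ n → x n ∈ N k := by
    intro k n hkn
    exact Submodule.le_topologicalClosure _ (Submodule.subset_span ⟨n, hkn, rfl⟩)
  have hmono : ∀ k m, k ≤ m → N m ≤ N k := by
    intro k m hkm
    apply Submodule.topologicalClosure_mono
    apply Submodule.span_mono
    rintro y ⟨n, hn, rfl⟩
    exact ⟨n, hkm.trans hn, rfl⟩
  have hmaps : ∀ (A : X →L[ℂ] X) (j k : ℕ), (∀ n, j ≤ n → A (x n) ∈ N k) →
      ∀ y ∈ N j, A y ∈ N k := by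
    intro A j k hA y hy
    have hsub : Submodule.span ℂ {y : X | ∃ n : ℕ, j ≤ n ∧ y = (S ^ n) x₀} ≤
        (N k).comap (A : X →ₗ[ℂ] X) := by
      rw [Submodule.span_le]
      rintro z ⟨n, hn, rfl⟩
      exact hA n hn
    have hcl : IsClosed (((N k).comap (A : X →ₗ[ℂ] X) : Submodule ℂ X) : Set X) :=
      (hclosed k).preimage A.continuous
    exact Submodule.topologicalClosure_minimal _ hsub hcl hy
  have hSmaps : ∀ k, ∀ y ∈ N k, S y ∈ N k := by
    intro k
    apply hmaps S k k
    intro n hn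
    have : S (x n) = x (n + 1) := by
      simp only [hxdef, pow_succ', ContinuousLinearMap.mul_apply]
    rw [this]
    exact hgen k (n + 1) (hn.trans (Nat.le_succ n))
  have hTmaps : ∀ k, ∀ y ∈ N (k + 1), T y ∈ N k := by
    intro k
    apply hmaps T (k + 1) k
    intro n hn
    obtain ⟨m, rfl⟩ := Nat.exists_eq_add_of_le hn
    have : T (x (k + 1 + m)) = x (k + m) := by
      have h1 : x (k + 1 + m) = S (x (k + m)) := by
        simp only [hxdef, ← ContinuousLinearMap.mul_apply, ← pow_succ']
        congr 1
        ring_nf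
      rw [h1, hTSapply]
    rw [this]
    exact hgen k (k + m) (Nat.le_add_right k m)
  -- the key non-membership
  have hkey : ∀ k : ℕ, 1 ≤ k → x k ∉ N (k + 1) := by
    intro k hk hmem
    have heq : N k = N (k + 1) := by
      refine le_antisymm ?_ (hmono k (k + 1) (Nat.le_succ k))
      apply Submodule.topologicalClosure_minimal
      · rw [Submodule.span_le]
        rintro z ⟨n, hn, rfl⟩
        rcases Nat.eq_or_lt_of_le hn with h | h
        · rw [← h]; exact hmem
        · exact hgen (k + 1) n h
      · exact hclosed (k + 1)
    have hTinv : ∀ y ∈ N (k + 1), T y ∈ N (k + 1) := by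
      intro y hy
      rw [← heq]
      exact hTmaps k y hy
    rcases htrans (N (k + 1)) (hclosed (k + 1)) hTinv with h | h
    · have : x (k + 1) ∈ N (k + 1) := hgen (k + 1) (k + 1) le_rfl
      rw [h] at this
      exact hxne (k + 1) (Submodule.mem_bot ℂ |>.mp this)
    · apply hN
      refine top_unique ?_
      rw [← h]
      exact hmono 1 (k + 1) (Nat.le_add_left 1 k)
  -- Hahn-Banach functionals
  have hHB : ∀ k : ℕ, ∃ g : X →L[ℂ] ℂ, 1 ≤ k →
      (g (x k) = 1 ∧ ∀ y ∈ N (k + 1), g y = 0) := by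
    intro k
    by_cases hk : 1 ≤ k
    · obtain ⟨g, hg1, hg2⟩ := exists_functional_of_not_mem (N (k + 1)) (hclosed (k + 1))
        (hkey k hk)
      exact ⟨g, fun _ => ⟨hg1, hg2⟩⟩
    · exact ⟨0, fun h => absurd h hk⟩
  choose g hg using hHB
  refine ⟨biorthAux g x, ?_⟩
  -- main induction
  have main : ∀ i, 1 ≤ i → ∀ j, 1 ≤ j →
      biorthAux g x i (x j) = if i = j then 1 else 0 := by
    intro i
    induction i using Nat.strong_induction_on with
    | _ i IH =>
      intro hi j hj
      rw [biorthAux]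
      simp only [ContinuousLinearMap.sub_apply, ContinuousLinearMap.coe_sum',
        Finset.sum_apply, ContinuousLinearMap.coe_smul', Pi.smul_apply, smul_eq_mul]
      have hterm : ∀ l ∈ (Finset.Ico 1 i).attach,
          g i (x l.1) * biorthAux g x l.1 (x j)
            = if l.1 = j then g i (x j) else 0 := by
        rintro ⟨l, hl⟩ _
        obtain ⟨hl1, hl2⟩ := Finset.mem_Ico.mp hl
        rw [IH l hl2 hl1 j hj]
        by_cases h : l = j
        · subst h; simp
        · simp [h]
      rw [Finset.sum_congr rfl hterm]
      rw [Finset.sum_attach (Finset.Ico 1 i) (fun l => if l = j then g i (x j) else 0)]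
      rw [Finset.sum_ite_eq' (Finset.Ico 1 i) j (fun _ => g i (x j))]
      rcases lt_trichotomy i j with h | h | h
      · -- j > i : g i (x j) = 0
        have hgz : g i (x j) = 0 := (hg i hi).2 (x j) (hgen (i + 1) j h)
        rw [hgz]
        simp [Finset.mem_Ico, if_neg (Nat.ne_of_lt h)]
      · subst h
        have : i ∉ Finset.Ico 1 i := by simp
        rw [if_neg this, (hg i hi).1]
        simp
      · have : j ∈ Finset.Ico 1 i := Finset.mem_Ico.mpr ⟨hj, h⟩
        rw [if_pos this]
        simp [Nat.ne_of_gt h]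
  intro i j hi hj
  exact main i hi j hj
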